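/- Let p ≥ 2, μ ∈ S^{p-1}, ξ ∈ S^{p-1} with μᵀξ = 0, and δ ∈ (−1,1). Let g₁ : [−1,1] → ℝ₊ be a continuous strictly increasing nonnegative function. For t ∈ [−1,1] set x_t = t μ + √(1 − t²) ξ ∈ S^{p-1} and h(t) = ∫_{{x₁ ∈ S^{p-1} : x_tᵀ x₁ ≥ δ}} g₁(μᵀ x₁) dx₁. Then h is strictly increasing on [−1,1]: for all −1 ≤ t < t' ≤ 1 one has h(t) < h(t'). -/

import Mathlib

open MeasureTheory Set
open scoped RealInnerProductSpace

noncomputable section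

/-- The unit sphere `S^{p-1} = {x ∈ ℝ^p : ‖x‖ = 1}` in `ℝ^p`. -/
abbrev Sph (p : ℕ) : Type := Metric.sphere (0 : EuclideanSpace ℝ (Fin p)) 1

/-- The `(p-1)`-dimensional surface measure on the unit sphere `S^{p-1}`. -/
def sphMeasure (p : ℕ) : Measure (Sph p) :=
  (volume : Measure (EuclideanSpace ℝ (Fin p))).toSphere

/-- The cosine `xᵀy` of the angle between two points of the sphere. -/
def cosAngle {p : ℕ} (x y : Sph p) : ℝ :=
  ⟪(x : EuclideanSpace ℝ (Fin p)), (y : EuclideanSpace ℝ (Fin p))⟫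

/-- The spherical convolution `(f ⋆_μ g)(x) = ∫_{S^{p-1}} F(xᵀy) G(yᵀμ) dy` of two
rotationally symmetric functions `f(x) = F(μᵀx)`, `g(x) = G(μᵀx)` about the axis `μ`. -/
def sphConv {p : ℕ} (F G : ℝ → ℝ) (μ : Sph p) (x : Sph p) : ℝ :=
  ∫ y : Sph p, F (cosAngle x y) * G (cosAngle y μ) ∂(sphMeasure p)


section AuxLemmas

open Real
open scoped Pointwise

variable {p : ℕ}


/-- The map induced on the unit sphere by a linear isometry equivalence. -/
def sphMap (f : EuclideanSpace ℝ (Fin p) ≃ₗᵢ[ℝ] EuclideanSpace ℝ (Fin p)) (x : Sph p) : Sph p :=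
  ⟨f x, by
    rw [mem_sphere_zero_iff_norm, f.norm_map]
    exact mem_sphere_zero_iff_norm.mp x.2⟩

lemma continuous_sphMap (f : EuclideanSpace ℝ (Fin p) ≃ₗᵢ[ℝ] EuclideanSpace ℝ (Fin p)) :
    Continuous (sphMap f) :=
  (f.continuous.comp continuous_subtype_val).subtype_mk _

lemma injective_sphMap (f : EuclideanSpace ℝ (Fin p) ≃ₗᵢ[ℝ] EuclideanSpace ℝ (Fin p)) :
    Function.Injective (sphMap f) := by
  intro x y hxy
  exact Subtype.ext (f.injective (congrArg Subtype.val hxy))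

lemma measurableEmbedding_sphMap (f : EuclideanSpace ℝ (Fin p) ≃ₗᵢ[ℝ] EuclideanSpace ℝ (Fin p)) :
    MeasurableEmbedding (sphMap f) :=
  ((continuous_sphMap f).isClosedEmbedding (injective_sphMap f)).measurableEmbedding

lemma measurePreserving_sphMap (f : EuclideanSpace ℝ (Fin p) ≃ₗᵢ[ℝ] EuclideanSpace ℝ (Fin p)) :
    MeasurePreserving (sphMap f) (sphMeasure p) (sphMeasure p) := by
  refine ⟨(continuous_sphMap f).measurable, ?_⟩
  ext s hs
  have hpre : MeasurableSet (sphMap f ⁻¹' s) := (continuous_sphMap f).measurable hs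
  rw [Measure.map_apply (continuous_sphMap f).measurable hs]
  rw [sphMeasure, Measure.toSphere_apply' _ hs, Measure.toSphere_apply' _ hpre]
  congr 1
  have h1 : (Subtype.val '' (sphMap f ⁻¹' s)) = f ⁻¹' (Subtype.val '' s) := by
    ext y
    constructor
    · rintro ⟨x, hx, rfl⟩
      exact ⟨sphMap f x, hx, rfl⟩
    · rintro ⟨z, hz, hzy⟩
      have hy : ‖y‖ = 1 := by
        have : ‖f y‖ = 1 := by rw [← hzy]; exact mem_sphere_zero_iff_norm.mp z.2
        rwa [f.norm_map] at this
      refine ⟨⟨y, mem_sphere_zero_iff_norm.mpr hy⟩, ?_, rfl⟩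
      have : sphMap f ⟨y, mem_sphere_zero_iff_norm.mpr hy⟩ = z := Subtype.ext hzy.symm
      rw [Set.mem_preimage, this]; exact hz
  rw [h1]
  have h2 : Ioo (0:ℝ) 1 • (f ⁻¹' (Subtype.val '' s)) = f ⁻¹' (Ioo (0:ℝ) 1 • (Subtype.val '' s)) := by
    ext y
    constructor
    · rintro ⟨r, hr, z, hz, rfl⟩
      exact Set.mem_preimage.mpr ⟨r, hr, f z, hz, (f.map_smul r z).symm⟩
    · rintro ⟨r, hr, w, hw, hrw⟩
      refine ⟨r, hr, f.symm w, by simpa using hw, ?_⟩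
      have hrw' : r • w = f y := hrw
      have hy : f.symm (r • w) = y := by rw [hrw']; exact f.symm_apply_apply y
      show r • f.symm w = y
      rw [← hy, f.symm.map_smul]
  rw [h2]
  have hfm : MeasurePreserving (f.toHomeomorph.toMeasurableEquiv)
      (volume : Measure (EuclideanSpace ℝ (Fin p))) volume := f.measurePreserving
  exact hfm.measure_preimage_equiv _

lemma sphMeasure_pos_of_isOpen (hp : 2 ≤ p) {U : Set (Sph p)} (hU : IsOpen U)
    (hne : U.Nonempty) : 0 < sphMeasure p U := by
  obtain ⟨V, hV, hUV⟩ := isOpen_induced_iff.mp hU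
  set g : EuclideanSpace ℝ (Fin p) → EuclideanSpace ℝ (Fin p) := fun y => ‖y‖⁻¹ • y with hg
  have hW : IsOpen (Metric.ball (0 : EuclideanSpace ℝ (Fin p)) 1 ∩ {(0 : EuclideanSpace ℝ (Fin p))}ᶜ) :=
    Metric.isOpen_ball.inter (isClosed_singleton.isOpen_compl)
  have hgc : ContinuousOn g (Metric.ball (0 : EuclideanSpace ℝ (Fin p)) 1 ∩ {0}ᶜ) := by
    refine ContinuousOn.smul (f := fun y : EuclideanSpace ℝ (Fin p) => ‖y‖⁻¹) (g := id) ?_ ?_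
    · exact (continuous_norm.continuousOn).inv₀ fun y hy => by
        simpa [norm_eq_zero] using hy.2
    · exact continuousOn_id
  have hO : IsOpen ((Metric.ball (0 : EuclideanSpace ℝ (Fin p)) 1 ∩ {0}ᶜ) ∩ g ⁻¹' V) :=
    hgc.isOpen_inter_preimage hW hV
  obtain ⟨x₀, hx₀⟩ := hne
  have hx₀n : ‖(x₀ : EuclideanSpace ℝ (Fin p))‖ = 1 := mem_sphere_zero_iff_norm.mp x₀.2
  have hOne : (((Metric.ball (0 : EuclideanSpace ℝ (Fin p)) 1 ∩ {0}ᶜ) ∩ g ⁻¹' V)).Nonempty := by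
    refine ⟨(2:ℝ)⁻¹ • (x₀ : EuclideanSpace ℝ (Fin p)), ⟨⟨?_, ?_⟩, ?_⟩⟩
    · rw [mem_ball_zero_iff, norm_smul, hx₀n]
      norm_num
    · simp only [Set.mem_compl_iff, Set.mem_singleton_iff]
      intro h
      have := congrArg norm h
      rw [norm_smul, hx₀n, norm_zero] at this
      norm_num at this
    · have : g ((2:ℝ)⁻¹ • (x₀ : EuclideanSpace ℝ (Fin p))) = (x₀ : EuclideanSpace ℝ (Fin p)) := by
        rw [hg]
        simp only [norm_smul, hx₀n]
        rw [smul_smul]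
        norm_num
      rw [Set.mem_preimage, this]
      rw [← hUV] at hx₀
      exact hx₀
  have hsub : ((Metric.ball (0 : EuclideanSpace ℝ (Fin p)) 1 ∩ {0}ᶜ) ∩ g ⁻¹' V)
      ⊆ Ioo (0:ℝ) 1 • (Subtype.val '' U) := by
    rintro y ⟨⟨hyb, hy0⟩, hyV⟩
    have hy0' : y ≠ 0 := hy0
    have hyn : 0 < ‖y‖ := norm_pos_iff.mpr hy0'
    have hxn : ‖g y‖ = 1 := by
      rw [hg]; simp only [norm_smul, norm_inv, norm_norm]
      field_simp
    refine ⟨‖y‖, ⟨hyn, mem_ball_zero_iff.mp hyb⟩, g y, ?_, ?_⟩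
    · refine ⟨⟨g y, mem_sphere_zero_iff_norm.mpr hxn⟩, ?_, rfl⟩
      rw [← hUV]; exact hyV
    · rw [hg]; simp only [smul_smul]
      rw [mul_inv_cancel₀ (ne_of_gt hyn), one_smul]
  rw [sphMeasure, Measure.toSphere_apply' _ hU.measurableSet]
  apply ENNReal.mul_pos
  · have : Module.finrank ℝ (EuclideanSpace ℝ (Fin p)) = p := finrank_euclideanSpace_fin
    rw [this]
    simp only [ne_eq, Nat.cast_eq_zero]
    omega
  · have := (hO.measure_pos volume hOne).trans_le (measure_mono hsub)
    exact this.ne'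




lemma reflection_formula {E : Type*} [NormedAddCommGroup E] [InnerProductSpace ℝ E]
    [CompleteSpace E] (v : E) (hv : ‖v‖ = 1) (w : E) :
    Submodule.reflection (ℝ ∙ v)ᗮ w = w - (2 * ⟪v, w⟫) • v := by
  have hw : w = (w - ⟪v, w⟫ • v) + ⟪v, w⟫ • v := by abel
  have h₁ : w - ⟪v, w⟫ • v ∈ (ℝ ∙ v)ᗮ := by
    rw [Submodule.mem_orthogonal_singleton_iff_inner_right]
    rw [inner_sub_right, real_inner_smul_right, real_inner_self_eq_norm_sq, hv]
    ring
  have h₂ : Submodule.reflection (ℝ ∙ v)ᗮ (⟪v, w⟫ • v) = -(⟪v, w⟫ • v) := by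
    rw [_root_.map_smul, Submodule.reflection_orthogonalComplement_singleton_eq_neg, smul_neg]
  calc Submodule.reflection (ℝ ∙ v)ᗮ w
      = Submodule.reflection (ℝ ∙ v)ᗮ ((w - ⟪v, w⟫ • v) + ⟪v, w⟫ • v) := by rw [← hw]
    _ = (w - ⟪v, w⟫ • v) + -(⟪v, w⟫ • v) := by
        rw [_root_.map_add, Submodule.reflection_mem_subspace_eq_self h₁, h₂]
    _ = w - (2 * ⟪v, w⟫) • v := by
        rw [two_mul, add_smul]; abel




lemma exists_witness {E : Type*} [NormedAddCommGroup E] [InnerProductSpace ℝ E]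
    (μ ξ : E) (hμ1 : ‖μ‖ = 1) (hξ1 : ‖ξ‖ = 1) (hperp : ⟪μ, ξ⟫ = 0)
    (δ t t' : ℝ) (hδl : -1 < δ) (hδu : δ < 1)
    (ht : -1 ≤ t) (htt' : t < t') (ht' : t' ≤ 1) :
    ∃ x : E, ‖x‖ = 1 ∧ δ < ⟪t • μ + Real.sqrt (1 - t ^ 2) • ξ, x⟫ ∧
      ⟪t' • μ + Real.sqrt (1 - t' ^ 2) • ξ, x⟫ < δ := by
  have ht1 : t ≤ 1 := le_trans (le_of_lt htt') ht'
  have hperp' : ⟪ξ, μ⟫ = 0 := by rw [real_inner_comm]; exact hperp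
  have ht'1 : -1 ≤ t' := le_trans ht (le_of_lt htt')
  set α := Real.arccos t with hαdef
  set β := Real.arccos t' with hβdef
  set d := Real.arccos δ with hddef
  have hγpos : 0 < α - β := by
    have := Real.strictAntiOn_arccos ⟨ht, ht1⟩ ⟨ht'1, ht'⟩ htt'
    linarith
  have hγle : α - β ≤ π := by
    have h1 := Real.arccos_le_pi t
    have h2 := Real.arccos_nonneg t'
    linarith
  have hd0 : 0 < d := Real.arccos_pos.mpr hδu
  have hdπ : d < π := by
    rcases lt_or_eq_of_le (Real.arccos_le_pi δ) with h | h
    · exact h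
    · exfalso; have := Real.arccos_eq_pi.mp h; linarith
  set γ := α - β with hγdef
  set ε := (max 0 (γ + 2*d - 2*π) + min γ d) / 2 with hεdef
  have hmaxmin : max 0 (γ + 2*d - 2*π) < min γ d := by
    apply max_lt
    · exact lt_min hγpos hd0
    · apply lt_min <;> linarith
  have hε1 : 0 < ε := by
    have := le_max_left 0 (γ + 2*d - 2*π); rw [hεdef]; linarith
  have hε2 : γ + 2*d - 2*π < ε := by
    have := le_max_right 0 (γ + 2*d - 2*π); rw [hεdef]; linarith
  have hε3 : ε < γ := by
    have := min_le_left γ d; rw [hεdef]; linarith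
  have hε4 : ε < d := by
    have := min_le_right γ d; rw [hεdef]; linarith
  obtain ⟨θ, hθdef⟩ : ∃ θ : ℝ, θ = α + d - ε := ⟨_, rfl⟩
  -- the two key cosine inequalities
  have key1 : δ < Real.cos (d - ε) := by
    have := Real.cos_lt_cos_of_nonneg_of_le_pi (by linarith : (0:ℝ) ≤ d - ε)
      (by linarith : d ≤ π) (by linarith : d - ε < d)
    rwa [Real.cos_arccos (le_of_lt hδl) (le_of_lt hδu)] at this
  have key2 : Real.cos (γ + d - ε) < δ := by
    rw [← Real.cos_arccos (le_of_lt hδl) (le_of_lt hδu)]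
    rcases le_or_gt (γ + d - ε) π with h | h
    · exact Real.cos_lt_cos_of_nonneg_of_le_pi (le_of_lt hd0) h (by linarith)
    · have hc : Real.cos (γ + d - ε) = Real.cos (2*π - (γ + d - ε)) := by
        rw [Real.cos_two_pi_sub]
      rw [hc]
      exact Real.cos_lt_cos_of_nonneg_of_le_pi (le_of_lt hd0) (by linarith) (by linarith)
  refine ⟨Real.cos θ • μ + Real.sin θ • ξ, ?_, ?_, ?_⟩
  · have hsq : ‖Real.cos θ • μ + Real.sin θ • ξ‖ ^ 2 = 1 := by
      rw [norm_add_sq_real]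
      rw [real_inner_smul_left, real_inner_smul_right, hperp]
      rw [norm_smul, norm_smul, hμ1, hξ1]
      simp only [Real.norm_eq_abs, mul_one, mul_zero]
      have := Real.sin_sq_add_cos_sq θ
      rw [sq_abs, sq_abs]
      linarith
    nlinarith [norm_nonneg (Real.cos θ • μ + Real.sin θ • ξ), hsq]
  · have hin : ⟪t • μ + Real.sqrt (1 - t ^ 2) • ξ, Real.cos θ • μ + Real.sin θ • ξ⟫
        = t * Real.cos θ + Real.sqrt (1 - t ^ 2) * Real.sin θ := by
      simp only [inner_add_left, inner_add_right, real_inner_smul_left, real_inner_smul_right,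
        real_inner_self_eq_norm_sq, hμ1, hξ1, hperp, hperp']
      ring
    rw [hin]
    have hcosα : Real.cos α = t := Real.cos_arccos ht ht1
    have hsinα : Real.sin α = Real.sqrt (1 - t ^ 2) := Real.sin_arccos t
    have hexp : Real.cos (θ - α) = t * Real.cos θ + Real.sqrt (1 - t ^ 2) * Real.sin θ := by
      rw [Real.cos_sub, hcosα, hsinα]; ring
    rw [← hexp]
    have hθα : θ - α = d - ε := by rw [hθdef]; ring
    rw [hθα]; exact key1
  · have hin : ⟪t' • μ + Real.sqrt (1 - t' ^ 2) • ξ, Real.cos θ • μ + Real.sin θ • ξ⟫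
        = t' * Real.cos θ + Real.sqrt (1 - t' ^ 2) * Real.sin θ := by
      simp only [inner_add_left, inner_add_right, real_inner_smul_left, real_inner_smul_right,
        real_inner_self_eq_norm_sq, hμ1, hξ1, hperp, hperp']
      ring
    rw [hin]
    have hcosβ : Real.cos β = t' := Real.cos_arccos ht'1 ht'
    have hsinβ : Real.sin β = Real.sqrt (1 - t' ^ 2) := Real.sin_arccos t'
    have hexp : Real.cos (θ - β) = t' * Real.cos θ + Real.sqrt (1 - t' ^ 2) * Real.sin θ := by
      rw [Real.cos_sub, hcosβ, hsinβ]; ring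
    rw [← hexp]
    have hθβ : θ - β = γ + d - ε := by rw [hθdef, hγdef]; ring
    rw [hθβ]; exact key2


end AuxLemmas

set_option maxHeartbeats 1600000

/-- monotonicity of the cap integral. For `μ ⊥ ξ` unit vectors,
`δ ∈ (-1,1)`, `g₁` continuous, strictly increasing and nonnegative on `[-1,1]`, and
`x_t = t μ + √(1-t²) ξ`, the function
`h(t) = ∫_{{x₁ : x_tᵀx₁ ≥ δ}} g₁(μᵀx₁) dx₁` is strictly increasing on `[-1,1]`. -/
theorem stmt_17 {p : ℕ} (hp : 2 ≤ p) (μ ξ : Sph p)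
    (hperp : ⟪(μ : EuclideanSpace ℝ (Fin p)), (ξ : EuclideanSpace ℝ (Fin p))⟫ = 0)
    (δ : ℝ) (hδ : δ ∈ Ioo (-1 : ℝ) 1) (g₁ : ℝ → ℝ)
    (hc : ContinuousOn g₁ (Icc (-1 : ℝ) 1)) (hm : StrictMonoOn g₁ (Icc (-1 : ℝ) 1))
    (hnn : ∀ t ∈ Icc (-1 : ℝ) 1, 0 ≤ g₁ t)
    (t t' : ℝ) (ht : -1 ≤ t) (htt' : t < t') (ht' : t' ≤ 1) :
    (∫ x in {x : Sph p | δ ≤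
          ⟪t • (μ : EuclideanSpace ℝ (Fin p)) +
              Real.sqrt (1 - t ^ 2) • (ξ : EuclideanSpace ℝ (Fin p)),
            (x : EuclideanSpace ℝ (Fin p))⟫},
        g₁ (cosAngle μ x) ∂(sphMeasure p)) <
      ∫ x in {x : Sph p | δ ≤
          ⟪t' • (μ : EuclideanSpace ℝ (Fin p)) +
              Real.sqrt (1 - t' ^ 2) • (ξ : EuclideanSpace ℝ (Fin p)),
            (x : EuclideanSpace ℝ (Fin p))⟫},
        g₁ (cosAngle μ x) ∂(sphMeasure p) := by
  obtain ⟨hδl, hδu⟩ := hδ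
  have ht1 : t ≤ 1 := le_trans (le_of_lt htt') ht'
  have ht'1 : -1 ≤ t' := le_trans ht (le_of_lt htt')
  have hμ1 : ‖(μ : EuclideanSpace ℝ (Fin p))‖ = 1 := mem_sphere_zero_iff_norm.mp μ.2
  have hξ1 : ‖(ξ : EuclideanSpace ℝ (Fin p))‖ = 1 := mem_sphere_zero_iff_norm.mp ξ.2
  have hperp' : ⟪(ξ : EuclideanSpace ℝ (Fin p)), (μ : EuclideanSpace ℝ (Fin p))⟫ = 0 := by
    rw [real_inner_comm]; exact hperp
  set a : EuclideanSpace ℝ (Fin p) :=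
    t • (μ : EuclideanSpace ℝ (Fin p)) +
      Real.sqrt (1 - t ^ 2) • (ξ : EuclideanSpace ℝ (Fin p)) with hadef
  set b : EuclideanSpace ℝ (Fin p) :=
    t' • (μ : EuclideanSpace ℝ (Fin p)) +
      Real.sqrt (1 - t' ^ 2) • (ξ : EuclideanSpace ℝ (Fin p)) with hbdef
  clear_value a b
  have hsq_t : Real.sqrt (1 - t ^ 2) ^ 2 = 1 - t ^ 2 :=
    Real.sq_sqrt (by nlinarith : (0:ℝ) ≤ 1 - t ^ 2)
  have hsq_t' : Real.sqrt (1 - t' ^ 2) ^ 2 = 1 - t' ^ 2 :=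
    Real.sq_sqrt (by nlinarith : (0:ℝ) ≤ 1 - t' ^ 2)
  have hnorm_aux : ∀ (c : ℝ) (hc1 : -1 ≤ c) (hc2 : c ≤ 1),
      ‖c • (μ : EuclideanSpace ℝ (Fin p)) +
        Real.sqrt (1 - c ^ 2) • (ξ : EuclideanSpace ℝ (Fin p))‖ = 1 := by
    intro c hc1 hc2
    have hsqc : Real.sqrt (1 - c ^ 2) ^ 2 = 1 - c ^ 2 :=
      Real.sq_sqrt (by nlinarith : (0:ℝ) ≤ 1 - c ^ 2)
    have hsq : ‖c • (μ : EuclideanSpace ℝ (Fin p)) +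
        Real.sqrt (1 - c ^ 2) • (ξ : EuclideanSpace ℝ (Fin p))‖ ^ 2 = 1 := by
      rw [norm_add_sq_real]
      rw [real_inner_smul_left, real_inner_smul_right, hperp]
      rw [norm_smul, norm_smul, hμ1, hξ1]
      simp only [Real.norm_eq_abs, mul_one, mul_zero]
      rw [sq_abs, sq_abs, hsqc]
      ring
    nlinarith [norm_nonneg (c • (μ : EuclideanSpace ℝ (Fin p)) +
        Real.sqrt (1 - c ^ 2) • (ξ : EuclideanSpace ℝ (Fin p))), hsq]
  have hsa : ‖a‖ = 1 := by rw [hadef]; exact hnorm_aux t ht ht1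
  have hsb : ‖b‖ = 1 := by rw [hbdef]; exact hnorm_aux t' ht'1 ht'
  have iam : ⟪a, (μ : EuclideanSpace ℝ (Fin p))⟫ = t := by
    rw [hadef]
    simp only [inner_add_left, real_inner_smul_left, real_inner_self_eq_norm_sq, hμ1, hperp']
    ring
  have ibm : ⟪b, (μ : EuclideanSpace ℝ (Fin p))⟫ = t' := by
    rw [hbdef]
    simp only [inner_add_left, real_inner_smul_left, real_inner_self_eq_norm_sq, hμ1, hperp']
    ring
  have hab : a ≠ b := by
    intro h
    have : t = t' := by rw [← iam, ← ibm, h]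
    linarith
  have hn : 0 < ‖a - b‖ := by
    rw [norm_pos_iff]
    exact sub_ne_zero.mpr hab
  set v : EuclideanSpace ℝ (Fin p) := ‖a - b‖⁻¹ • (a - b) with hvdef
  clear_value v
  have hv1 : ‖v‖ = 1 := by
    rw [hvdef, norm_smul, norm_inv, norm_norm, inv_mul_cancel₀ hn.ne']
  have habsq : ‖a - b‖ ^ 2 = 2 - 2 * ⟪a, b⟫ := by
    rw [norm_sub_sq_real, hsa, hsb]; ring
  set R := Submodule.reflection (ℝ ∙ v)ᗮ with hRdef
  clear_value R
  have hRw : ∀ w, R w = w - (2 * ⟪v, w⟫) • v := by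
    intro w; rw [hRdef]; exact reflection_formula v hv1 w
  have hinner_va : ⟪v, a⟫ = ‖a - b‖⁻¹ * (1 - ⟪a, b⟫) := by
    rw [hvdef, real_inner_smul_left, inner_sub_left, real_inner_self_eq_norm_sq, hsa,
      real_inner_comm b a]
    ring
  have hcoef : 2 * ⟪v, a⟫ = ‖a - b‖ := by
    have h2 : 2 * (1 - ⟪a, b⟫) = ‖a - b‖ ^ 2 := by linarith
    rw [hinner_va]
    have : 2 * (‖a - b‖⁻¹ * (1 - ⟪a, b⟫)) = ‖a - b‖⁻¹ * (2 * (1 - ⟪a, b⟫)) := by ring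
    rw [this, h2, sq]
    rw [← mul_assoc, inv_mul_cancel₀ hn.ne', one_mul]
  have hRa : R a = b := by
    rw [hRw, hcoef, hvdef, smul_smul, mul_inv_cancel₀ hn.ne', one_smul]
    abel
  have hRb : R b = a := by
    have h : R (R a) = a := by rw [hRdef]; exact Submodule.reflection_involutive (ℝ ∙ v)ᗮ a
    rw [hRa] at h
    exact h
  have hadj : ∀ c x : EuclideanSpace ℝ (Fin p), ⟪c, R x⟫ = ⟪R c, x⟫ := by
    intro c x
    simp only [hRw, inner_sub_right, inner_sub_left, real_inner_smul_right, real_inner_smul_left,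
      real_inner_comm v c]
    ring
  have hax : ∀ x : EuclideanSpace ℝ (Fin p), ⟪a, R x⟫ = ⟪b, x⟫ := by
    intro x; rw [hadj, hRa]
  have hbx : ∀ x : EuclideanSpace ℝ (Fin p), ⟪b, R x⟫ = ⟪a, x⟫ := by
    intro x; rw [hadj, hRb]
  set S := sphMap R with hSdef
  have hSval : ∀ x : Sph p, ((S x : Sph p) : EuclideanSpace ℝ (Fin p)) = R x := fun _ => rfl
  set Ca := {x : Sph p | δ ≤ ⟪a, (x : EuclideanSpace ℝ (Fin p))⟫} with hCadef
  set Cb := {x : Sph p | δ ≤ ⟪b, (x : EuclideanSpace ℝ (Fin p))⟫} with hCbdef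
  have hconta : Continuous fun x : Sph p => ⟪a, (x : EuclideanSpace ℝ (Fin p))⟫ :=
    continuous_const.inner continuous_subtype_val
  have hcontb : Continuous fun x : Sph p => ⟪b, (x : EuclideanSpace ℝ (Fin p))⟫ :=
    continuous_const.inner continuous_subtype_val
  have mCa : MeasurableSet Ca := (isClosed_le continuous_const hconta).measurableSet
  have mCb : MeasurableSet Cb := (isClosed_le continuous_const hcontb).measurableSet
  set F : Sph p → ℝ := fun x => g₁ (cosAngle μ x) with hFdef
  have hcos : Continuous fun x : Sph p => cosAngle μ x :=
    continuous_const.inner continuous_subtype_val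
  have hmemIcc : ∀ x : Sph p, cosAngle μ x ∈ Icc (-1 : ℝ) 1 := by
    intro x
    have := abs_real_inner_le_norm (μ : EuclideanSpace ℝ (Fin p)) (x : EuclideanSpace ℝ (Fin p))
    rw [hμ1, mem_sphere_zero_iff_norm.mp x.2, one_mul] at this
    exact abs_le.mp this
  have hFc : Continuous F := hc.comp_continuous hcos hmemIcc
  have hfin : IsFiniteMeasure (sphMeasure p) := by unfold sphMeasure; infer_instance
  have hFi : Integrable F (sphMeasure p) :=
    hFc.integrable_of_hasCompactSupport
      (IsCompact.of_isClosed_subset isCompact_univ (isClosed_tsupport F) (Set.subset_univ _))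
  have hFSc : Continuous fun x : Sph p => F (S x) := hFc.comp (continuous_sphMap R)
  have hFSi : Integrable (fun x : Sph p => F (S x)) (sphMeasure p) :=
    hFSc.integrable_of_hasCompactSupport
      (IsCompact.of_isClosed_subset isCompact_univ (isClosed_tsupport _) (Set.subset_univ _))
  have hSm : MeasurePreserving S (sphMeasure p) (sphMeasure p) := measurePreserving_sphMap R
  have hSemb : MeasurableEmbedding S := measurableEmbedding_sphMap R
  have hpre : S ⁻¹' (Cb \ Ca) = Ca \ Cb := by
    ext x
    simp only [Set.mem_preimage, Set.mem_diff, hCadef, hCbdef, Set.mem_setOf_eq, hSval x,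
      hax, hbx]
  have hpoint : ∀ x ∈ Ca \ Cb, F x < F (S x) := by
    rintro x ⟨hx1, hx2⟩
    have hx1' : δ ≤ ⟪a, (x : EuclideanSpace ℝ (Fin p))⟫ := hx1
    have hx2' : ⟪b, (x : EuclideanSpace ℝ (Fin p))⟫ < δ := not_le.mp hx2
    have hvx : 0 < ⟪v, (x : EuclideanSpace ℝ (Fin p))⟫ := by
      rw [hvdef, real_inner_smul_left, inner_sub_left]
      exact mul_pos (inv_pos.mpr hn) (by linarith)
    have hvμ : ⟪v, (μ : EuclideanSpace ℝ (Fin p))⟫ < 0 := by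
      rw [hvdef, real_inner_smul_left, inner_sub_left, iam, ibm]
      exact mul_neg_of_pos_of_neg (inv_pos.mpr hn) (by linarith)
    have hlt : ⟪(μ : EuclideanSpace ℝ (Fin p)), (x : EuclideanSpace ℝ (Fin p))⟫ <
        ⟪(μ : EuclideanSpace ℝ (Fin p)), R (x : EuclideanSpace ℝ (Fin p))⟫ := by
      rw [hRw, inner_sub_right, real_inner_smul_right]
      nlinarith [hvx, hvμ, real_inner_comm (μ : EuclideanSpace ℝ (Fin p)) v]
    have hmem1 : cosAngle μ x ∈ Icc (-1 : ℝ) 1 := hmemIcc x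
    have hmem2 : cosAngle μ (S x) ∈ Icc (-1 : ℝ) 1 := hmemIcc (S x)
    have hca : cosAngle μ (S x) =
        ⟪(μ : EuclideanSpace ℝ (Fin p)), R (x : EuclideanSpace ℝ (Fin p))⟫ := by
      rw [cosAngle, hSval x]
    have hca' : cosAngle μ x =
        ⟪(μ : EuclideanSpace ℝ (Fin p)), (x : EuclideanSpace ℝ (Fin p))⟫ := rfl
    rw [hFdef]
    simp only
    apply hm hmem1 hmem2
    rw [hca, hca']
    exact hlt
  have hABlt : ∫ x in Ca \ Cb, F x ∂(sphMeasure p) < ∫ x in Cb \ Ca, F x ∂(sphMeasure p) := by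
    have hchg : ∫ x in Cb \ Ca, F x ∂(sphMeasure p)
        = ∫ x in Ca \ Cb, F (S x) ∂(sphMeasure p) := by
      rw [← hpre]
      exact (hSm.setIntegral_preimage_emb hSemb F _).symm
    rw [hchg]
    have mD : MeasurableSet (Ca \ Cb) := mCa.diff mCb
    -- the open subset witnessing positivity
    set U := {x : Sph p | δ < ⟪a, (x : EuclideanSpace ℝ (Fin p))⟫} ∩
      {x : Sph p | ⟪b, (x : EuclideanSpace ℝ (Fin p))⟫ < δ} with hUdef
    have hUopen : IsOpen U :=
      (isOpen_lt continuous_const hconta).inter (isOpen_lt hcontb continuous_const)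
    have hUne : U.Nonempty := by
      obtain ⟨x₀, hx₀n, hx₀1, hx₀2⟩ := exists_witness (μ : EuclideanSpace ℝ (Fin p))
        (ξ : EuclideanSpace ℝ (Fin p)) hμ1 hξ1 hperp δ t t' hδl hδu ht htt' ht'
      refine ⟨⟨x₀, mem_sphere_zero_iff_norm.mpr hx₀n⟩, ?_, ?_⟩
      · show δ < ⟪a, x₀⟫
        rw [hadef]; exact hx₀1
      · show ⟪b, x₀⟫ < δ
        rw [hbdef]; exact hx₀2
    have hUsub : U ⊆ Ca \ Cb := by
      rintro x ⟨h1, h2⟩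
      simp only [Set.mem_setOf_eq] at h1 h2
      have hxa : x ∈ Ca := by rw [hCadef]; exact Set.mem_setOf_eq ▸ le_of_lt h1
      have hxb : x ∉ Cb := by rw [hCbdef]; exact Set.mem_setOf_eq ▸ not_le.mpr h2
      exact ⟨hxa, hxb⟩
    have hUpos : 0 < sphMeasure p U := sphMeasure_pos_of_isOpen hp hUopen hUne
    have hdiffpos : 0 < ∫ x in Ca \ Cb, (F (S x) - F x) ∂(sphMeasure p) := by
      rw [setIntegral_pos_iff_support_of_nonneg_ae ?hae ?hint]
      case hae =>
        filter_upwards [ae_restrict_mem mD] with x hx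
        exact sub_nonneg.mpr (hpoint x hx).le
      case hint => exact (hFSi.sub hFi).integrableOn
      refine hUpos.trans_le (measure_mono ?_)
      intro x hx
      have hxD : x ∈ Ca \ Cb := hUsub hx
      exact ⟨ne_of_gt (sub_pos.mpr (hpoint x hxD)), hxD⟩
    have hsub' : ∫ x in Ca \ Cb, (F (S x) - F x) ∂(sphMeasure p)
        = (∫ x in Ca \ Cb, F (S x) ∂(sphMeasure p)) - ∫ x in Ca \ Cb, F x ∂(sphMeasure p) :=
      integral_sub hFSi.integrableOn hFi.integrableOn
    rw [hsub'] at hdiffpos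
    linarith
  have hCaSplit : ∫ x in Ca, F x ∂(sphMeasure p)
      = (∫ x in Ca ∩ Cb, F x ∂(sphMeasure p)) + ∫ x in Ca \ Cb, F x ∂(sphMeasure p) := by
    conv_lhs => rw [← Set.inter_union_diff Ca Cb]
    exact setIntegral_union (Set.disjoint_left.mpr fun x hx hx' => hx'.2 hx.2)
      (mCa.diff mCb) hFi.integrableOn hFi.integrableOn
  have hCbSplit : ∫ x in Cb, F x ∂(sphMeasure p)
      = (∫ x in Ca ∩ Cb, F x ∂(sphMeasure p)) + ∫ x in Cb \ Ca, F x ∂(sphMeasure p) := by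
    conv_lhs => rw [← Set.inter_union_diff Cb Ca]
    rw [Set.inter_comm Cb Ca]
    exact setIntegral_union (Set.disjoint_left.mpr fun x hx hx' => hx'.2 hx.1)
      (mCb.diff mCa) hFi.integrableOn hFi.integrableOn
  show (∫ x in Ca, F x ∂(sphMeasure p)) < ∫ x in Cb, F x ∂(sphMeasure p)
  rw [hCaSplit, hCbSplit]
  linarith
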